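/- In a weighted star graph with center 0 and leaf nodes with degrees k_1,...,k_n (link weight c_{0i} = k_i), the effective resistance between leaf nodes i and j is ω_{ij} = 1/k_i + 1/k_j, and for any subset V of the leaves the vector with entries p_i = 1/2 - (|V| - 2)k_i/(4 m_V), where 2m_V = ∑_{i∈V} k_i, satisfies Ω_{VV} p = α u for some constant α. -/

import Mathlib

open Finset Matrix

/-- In a weighted star graph with center `none` and leaf nodes `some i` with degrees `k i`
(link weight `c_{0i} = k i`), the effective resistance between distinct leaves `i, j` is
`ω_{ij} = 1/k i + 1/k j`, and for any subset `V` of the leaves the vector with entries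
`p_i = 1/2 - (|V| - 2) k_i/(4 m_V)` (where `2 m_V = ∑_{i∈V} k i`) satisfies
`Ω_{VV} p = α u` for some constant `α`. -/
theorem weighted_star_resistance_and_local_solution {n : ℕ} (k : Fin n → ℝ)
    (hk : ∀ i, 0 < k i)
    (Q Qd : Matrix (Option (Fin n)) (Option (Fin n)) ℝ)
    (hQ : ∀ a b, Q a b = match a, b with
      | none, none => ∑ i, k i
      | none, some j => -k j
      | some i, none => -k i
      | some i, some j => if i = j then k i else 0)
    (h1 : Q * Qd * Q = Q) (h2 : Qd * Q * Qd = Qd)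
    (h3 : (Q * Qd)ᵀ = Q * Qd) (h4 : (Qd * Q)ᵀ = Qd * Q)
    (hconn : Q * Qd = 1 - ((n : ℝ) + 1)⁻¹ • Matrix.of (fun _ _ => (1 : ℝ)))
    (Ω : Matrix (Option (Fin n)) (Option (Fin n)) ℝ)
    (hΩ : ∀ a b, Ω a b =
      (Pi.single a 1 - Pi.single b 1) ⬝ᵥ Qd *ᵥ (Pi.single a 1 - Pi.single b 1)) :
    (∀ i j : Fin n, i ≠ j → Ω (some i) (some j) = 1 / k i + 1 / k j)
      ∧ ∀ V : Finset (Fin n), ∃ α : ℝ, ∀ i ∈ V,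
          ∑ j ∈ V, Ω (some i) (some j) *
            (1 / 2 - ((V.card : ℝ) - 2) * k j / (2 * ∑ l ∈ V, k l)) = α := by
  have hQsym : Qᵀ = Q := by
    ext a b
    rcases a with _ | i <;> rcases b with _ | j <;>
      simp only [Matrix.transpose_apply, hQ]
    split_ifs with h1' h2' h2'
    · rw [h1']
    · exact absurd h1'.symm h2'
    · exact absurd h2'.symm h1'
    · rfl
  -- main formula for off-diagonal resistances
  have hoff : ∀ i j : Fin n, i ≠ j → Ω (some i) (some j) = 1 / k i + 1 / k j := by
    intro i j hij
    set x : Option (Fin n) → ℝ :=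
      Pi.single (some i) 1 - Pi.single (some j) 1 with hx
    set y : Option (Fin n) → ℝ := fun a =>
      match a with
      | none => 0
      | some l => (if l = i then (k i)⁻¹ else 0) + (if l = j then -(k j)⁻¹ else 0)
      with hy
    have hxy : Q *ᵥ y = x := by
      funext a
      rcases a with _ | m
      · simp only [Matrix.mulVec, dotProduct, Fintype.sum_option, hQ, hy, hx,
          Pi.sub_apply, Pi.single_apply, mul_zero, zero_add, mul_add, mul_ite, mul_neg]
        rw [Finset.sum_add_distrib, Finset.sum_ite_eq' Finset.univ i,
          Finset.sum_ite_eq' Finset.univ j]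
        simp [(hk i).ne', (hk j).ne']
      · simp only [Matrix.mulVec, dotProduct, Fintype.sum_option, hQ, hy, hx,
          Pi.sub_apply, Pi.single_apply, mul_zero, zero_add, ite_mul, zero_mul]
        rw [Finset.sum_ite_eq Finset.univ m]
        simp only [Finset.mem_univ, if_true]
        rcases eq_or_ne m i with rfl | hmi
        · simp [hij, (hk m).ne']
        · rcases eq_or_ne m j with rfl | hmj
          · simp [hmi, (hk m).ne']
          · simp [hmi, hmj]
    have key : Ω (some i) (some j) = y ⬝ᵥ x := by
      rw [hΩ, ← hx]
      calc x ⬝ᵥ Qd *ᵥ x = (Q *ᵥ y) ⬝ᵥ ((Qd * Q) *ᵥ y) := by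
            rw [← hxy, Matrix.mulVec_mulVec]
        _ = (y ᵥ* Q) ⬝ᵥ ((Qd * Q) *ᵥ y) := by rw [← Matrix.mulVec_transpose, hQsym]
        _ = y ⬝ᵥ (Q *ᵥ ((Qd * Q) *ᵥ y)) := (Matrix.dotProduct_mulVec _ _ _).symm
        _ = y ⬝ᵥ ((Q * Qd * Q) *ᵥ y) := by rw [Matrix.mulVec_mulVec, Matrix.mul_assoc]
        _ = y ⬝ᵥ x := by rw [h1, hxy]
    have hyi : y (some i) = (k i)⁻¹ := by simp [hy, hij]
    have hyj : y (some j) = -(k j)⁻¹ := by simp [hy, Ne.symm hij]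
    rw [key, hx, dotProduct_sub, dotProduct_single, dotProduct_single,
      mul_one, mul_one, hyi, hyj]
    ring
  have hdiag : ∀ i : Fin n, Ω (some i) (some i) = 0 := by
    intro i
    rw [hΩ]
    simp
  refine ⟨hoff, fun V => ?_⟩
  rcases V.eq_empty_or_nonempty with rfl | hV
  · exact ⟨0, by simp⟩
  set M : ℝ := ∑ l ∈ V, k l with hM
  have hMpos : 0 < M := Finset.sum_pos (fun l _ => hk l) hV
  have hMM : M⁻¹ * M = 1 := inv_mul_cancel₀ hMpos.ne'
  set c : ℝ := (V.card : ℝ) with hc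
  refine ⟨(∑ j ∈ V, (k j)⁻¹) / 2 - (c - 2) ^ 2 / (2 * M), fun i hi => ?_⟩
  have hA : ∑ j ∈ V, (1 / 2 - (c - 2) * k j / (2 * M)) = 1 := by
    rw [Finset.sum_congr rfl (fun j _ =>
        show (1 : ℝ) / 2 - (c - 2) * k j / (2 * M) = 1 / 2 - ((c - 2) / (2 * M)) * k j
        from by ring),
      Finset.sum_sub_distrib, Finset.sum_const, ← Finset.mul_sum, ← hM,
      nsmul_eq_mul, ← hc]
    linear_combination (-(c - 2) / 2) * hMM
  have hsplit : ∀ j ∈ V, Ω (some i) (some j) * (1 / 2 - (c - 2) * k j / (2 * M))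
      = ((k i)⁻¹ + (k j)⁻¹) * (1 / 2 - (c - 2) * k j / (2 * M))
        - (if j = i then 2 * (k i)⁻¹ * (1 / 2 - (c - 2) * k i / (2 * M)) else 0) := by
    intro j _
    rcases eq_or_ne j i with rfl | hji
    · rw [hdiag, if_pos rfl]; ring
    · rw [hoff i j (Ne.symm hji), if_neg hji, one_div, one_div]; ring
  rw [Finset.sum_congr rfl hsplit, Finset.sum_sub_distrib,
    Finset.sum_ite_eq' V i, if_pos hi]
  have e1 : ∀ j ∈ V, ((k i)⁻¹ + (k j)⁻¹) * (1 / 2 - (c - 2) * k j / (2 * M))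
      = (k i)⁻¹ * (1 / 2 - (c - 2) * k j / (2 * M)) + ((k j)⁻¹ / 2 - (c - 2) / (2 * M)) := by
    intro j _
    have hkj : (k j)⁻¹ * k j = 1 := inv_mul_cancel₀ (hk j).ne'
    linear_combination (-(c - 2) / (2 * M)) * hkj
  rw [Finset.sum_congr rfl e1, Finset.sum_add_distrib, ← Finset.mul_sum, hA,
    Finset.sum_sub_distrib, ← Finset.sum_div, Finset.sum_const, nsmul_eq_mul, ← hc]
  have hki : (k i)⁻¹ * k i = 1 := inv_mul_cancel₀ (hk i).ne'
  linear_combination ((c - 2) / M) * hki
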